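/- Assume β̃ > 0 and let δ ∈ (0,1] satisfy (max_{1≤i≤m} γ_i/μ_i - 1)⁺ δ ≤ 1. Then for every p > 1: (i) for every x ∈ K₋ and u ∈ Δ, ⟨b̃(x,u), ∇𝒱_{p,δ}(x)⟩ ≤ p δ (δ β̃ + (m/(2δ))(1 + δ²) - δ ‖x‖₁) 𝒱_{p-1,δ}(x); and (ii) for every x ∈ K₊ and u ∈ Δ, ⟨b̃(x,u), ∇𝒱_{p,δ}(x)⟩ ≤ -p δ (β̃/m - δ β̃ - δ m/2 + δ ‖x⁻‖₁) 𝒱_{p-1,δ}(x), where ‖x‖₁ = ∑_i |x_i| and ‖x⁻‖₁ = ∑_i max(-x_i,0). -/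

import Mathlib

open scoped BigOperators
open MeasureTheory

noncomputable section

/-- The piecewise function `ψ` from Definition 1 of the paper. -/
def psi (t : ℝ) : ℝ :=
  if t ≤ -1 then -(1/2)
  else if t ≤ 0 then (t+1)^3 - (1/2)*(t+1)^4 - 1/2
  else t

/-- `Ψ(x) = ∑ i, ψ(x_i)/μ_i`. -/
def Psi (m : ℕ) (μ : Fin m → ℝ) (x : Fin m → ℝ) : ℝ := ∑ i, psi (x i) / μ i

/-- `Ψ_δ(x) = ∑ i, ψ(δ x_i)/μ_i`. -/
def Psid (m : ℕ) (μ : Fin m → ℝ) (δ : ℝ) (x : Fin m → ℝ) : ℝ :=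
  ∑ i, psi (δ * x i) / μ i

/-- The scaled Lyapunov function
`𝒱_{p,δ}(x) = (δ² Ψ(-x) + Ψ_δ(x) + m / min_i μ_i)^p`. -/
def Vpd (m : ℕ) (μ : Fin m → ℝ) (δ p : ℝ) (x : Fin m → ℝ) : ℝ :=
  (δ ^ 2 * Psi m μ (-x) + Psid m μ δ x + (m : ℝ) / ⨅ i, μ i) ^ p

/-- The drift `b̃(x,u) = -(β̃/m) M e - M (x - ⟨e,x⟩⁺ u) - ⟨e,x⟩⁺ Γ u`, written
componentwise, where `M = diag(μ)` and `Γ = diag(γ)`. -/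
def drift (m : ℕ) (μ γ : Fin m → ℝ) (β : ℝ) (x u : Fin m → ℝ) : Fin m → ℝ :=
  fun i => -(β / (m : ℝ)) * μ i - μ i * (x i - max (∑ j, x j) 0 * u i)
    - max (∑ j, x j) 0 * (γ i * u i)

/-- `trace(A ∇²f(x)) = ∑ i j, A_{ij} ∂_i ∂_j f(x)`. -/
def traceHess (m : ℕ) (A : Matrix (Fin m) (Fin m) ℝ) (f : (Fin m → ℝ) → ℝ)
    (x : Fin m → ℝ) : ℝ :=
  ∑ i, ∑ j, A i j *
    fderiv ℝ (fun y => fderiv ℝ f y (Pi.single i (1 : ℝ))) x (Pi.single j (1 : ℝ))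

/-! ### Auxiliary lemmas -/

/-- The derivative of `psi`. -/
def psi' (t : ℝ) : ℝ :=
  if t ≤ -1 then 0
  else if t ≤ 0 then 3*(t+1)^2 - 2*(t+1)^3
  else 1

lemma cubic_hasDerivAt (t : ℝ) :
    HasDerivAt (fun s : ℝ => (s+1)^3 - (1/2)*(s+1)^4 - 1/2) (3*(t+1)^2 - 2*(t+1)^3) t := by
  have h1 : HasDerivAt (fun s : ℝ => s + 1) 1 t := (hasDerivAt_id t).add_const 1
  have h3 := h1.pow 3
  have h4 := (h1.pow 4).const_mul (1/2 : ℝ)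
  have := (h3.sub h4).sub_const (1/2 : ℝ)
  exact this.congr_deriv (by ring)

lemma psi_at_neg1 : HasDerivAt psi 0 (-1 : ℝ) := by
  have hl : HasDerivWithinAt psi 0 (Set.Iic (-1)) (-1 : ℝ) := by
    apply (hasDerivWithinAt_const (-1:ℝ) _ (-(1/2:ℝ))).congr
    · intro y hy; have hy' : y ≤ -1 := hy; simp [psi, hy']
    · simp [psi]
  have hr : HasDerivWithinAt psi 0 (Set.Ici (-1)) (-1 : ℝ) := by
    have hc : HasDerivWithinAt (fun s : ℝ => (s+1)^3 - (1/2)*(s+1)^4 - 1/2) 0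
        (Set.Ici (-1)) (-1 : ℝ) := by
      have := (cubic_hasDerivAt (-1)).hasDerivWithinAt (s := Set.Ici (-1))
      exact this.congr_deriv (by norm_num)
    apply hc.congr_of_eventuallyEq
    · filter_upwards [(eventually_lt_nhds (show (-1:ℝ) < 0 by norm_num)).filter_mono
        nhdsWithin_le_nhds, self_mem_nhdsWithin] with s hs0 hsI
      have hsI' : (-1:ℝ) ≤ s := hsI
      rcases eq_or_lt_of_le hsI' with h | h
      · rw [← h]; norm_num [psi]
      · simp [psi, not_le.mpr h, hs0.le]
    · norm_num [psi]
  have := hl.union hr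
  rw [Set.Iic_union_Ici, hasDerivWithinAt_univ] at this
  exact this

lemma psi_at_zero : HasDerivAt psi 1 (0 : ℝ) := by
  have hl : HasDerivWithinAt psi 1 (Set.Iic 0) (0 : ℝ) := by
    have hc : HasDerivWithinAt (fun s : ℝ => (s+1)^3 - (1/2)*(s+1)^4 - 1/2) 1
        (Set.Iic 0) (0 : ℝ) := by
      have := (cubic_hasDerivAt 0).hasDerivWithinAt (s := Set.Iic 0)
      exact this.congr_deriv (by norm_num)
    apply hc.congr_of_eventuallyEq
    · filter_upwards [(eventually_gt_nhds (show (-1:ℝ) < 0 by norm_num)).filter_mono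
        nhdsWithin_le_nhds, self_mem_nhdsWithin] with s hs1 hs0
      have hs0' : s ≤ 0 := hs0
      simp [psi, not_le.mpr hs1, hs0']
    · norm_num [psi]
  have hr : HasDerivWithinAt psi 1 (Set.Ici 0) (0 : ℝ) := by
    apply (hasDerivWithinAt_id (0:ℝ) _).congr
    · intro y hy
      rcases eq_or_lt_of_le (Set.mem_Ici.mp hy) with h | h
      · norm_num [psi, ← h]
      · have : ¬ y ≤ -1 := by linarith
        simp [psi, this, not_le.mpr h]
    · norm_num [psi]
  have := hl.union hr
  rw [Set.Iic_union_Ici, hasDerivWithinAt_univ] at this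
  exact this

lemma hasDerivAt_psi (t : ℝ) : HasDerivAt psi (psi' t) t := by
  rcases lt_trichotomy t (-1) with h | h | h
  · have hev : psi =ᶠ[nhds t] (fun _ => -(1/2 : ℝ)) := by
      filter_upwards [eventually_lt_nhds h] with s hs
      simp [psi, hs.le]
    have : psi' t = 0 := by simp [psi', h.le]
    rw [this]
    exact (hasDerivAt_const t (-(1/2:ℝ))).congr_of_eventuallyEq hev
  · subst h
    have : psi' (-1) = 0 := by simp [psi']
    rw [this]; exact psi_at_neg1
  · rcases lt_trichotomy t 0 with h0 | h0 | h0
    · have hev : psi =ᶠ[nhds t] (fun s => (s+1)^3 - (1/2)*(s+1)^4 - 1/2) := by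
        filter_upwards [eventually_gt_nhds h, eventually_lt_nhds h0] with s hs hs0
        simp [psi, not_le.mpr hs, hs0.le]
      have : psi' t = 3*(t+1)^2 - 2*(t+1)^3 := by simp [psi', not_le.mpr h, h0.le]
      rw [this]
      exact (cubic_hasDerivAt t).congr_of_eventuallyEq hev
    · subst h0
      have : psi' 0 = 1 := by norm_num [psi']
      rw [this]; exact psi_at_zero
    · have hev : psi =ᶠ[nhds t] (fun s => s) := by
        filter_upwards [eventually_gt_nhds h0] with s hs
        have : ¬ s ≤ -1 := by linarith
        simp [psi, this, not_le.mpr hs]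
      have : psi' t = 1 := by
        have : ¬ t ≤ -1 := by linarith
        simp [psi', this, not_le.mpr h0]
      rw [this]
      exact (hasDerivAt_id t).congr_of_eventuallyEq hev

lemma psi'_nonneg (t : ℝ) : 0 ≤ psi' t := by
  unfold psi'
  split_ifs with h1 h2
  · norm_num
  · nlinarith [mul_nonneg (sq_nonneg (t+1)) (show (0:ℝ) ≤ 1-2*t by linarith)]
  · norm_num

lemma psi'_le_one (t : ℝ) : psi' t ≤ 1 := by
  unfold psi'
  split_ifs with h1 h2
  · norm_num
  · nlinarith [mul_nonneg (mul_nonneg (sq_nonneg t) (show (0:ℝ) ≤ t+1 by linarith))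
      (show (0:ℝ) ≤ t+1 by linarith), sq_nonneg t,
      mul_nonneg (sq_nonneg t) (show (0:ℝ) ≤ t+1 by linarith)]
  · norm_num

lemma psi'_eq_one (t : ℝ) (ht : 0 ≤ t) : psi' t = 1 := by
  unfold psi'
  split_ifs with h1 h2
  · linarith
  · have : t = 0 := le_antisymm h2 ht
    rw [this]; norm_num
  · rfl

lemma psi'_key (t : ℝ) (ht : t ≤ 0) : -t * psi' t ≤ 1/2 := by
  unfold psi'
  split_ifs with h1 h2
  · linarith
  · nlinarith [sq_nonneg (t+1), sq_nonneg t, not_le.mp h1, sq_nonneg (t+1/2),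
      sq_nonneg ((t+1)^2 - 1/2), mul_nonneg (sq_nonneg (t+1)) (neg_nonneg.mpr ht)]

lemma psi_ge (t : ℝ) : -(1/2) ≤ psi t := by
  unfold psi
  split_ifs with h1 h2
  · norm_num
  · nlinarith [not_le.mp h1, pow_nonneg (by linarith : (0:ℝ) ≤ t+1) 3, sq_nonneg (t+1)]
  · linarith [not_le.mp h2]

lemma psi_id (t : ℝ) (ht : 0 ≤ t) : psi t = t := by
  unfold psi
  split_ifs with h1 h2
  · linarith
  · have : t = 0 := le_antisymm h2 ht
    rw [this]; norm_num
  · rfl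

lemma psi_combo (δ t : ℝ) (hδ0 : 0 < δ) (hδ1 : δ ≤ 1) :
    -(1/2) ≤ δ^2 * psi (-t) + psi (δ*t) := by
  rcases le_or_gt 0 t with ht | ht
  · have h1 : -(1/2) ≤ psi (-t) := psi_ge _
    have h2 : psi (δ*t) = δ*t := psi_id _ (by positivity)
    nlinarith [sq_nonneg δ, mul_pos hδ0 hδ0]
  · have h1 : psi (-t) = -t := psi_id _ (by linarith)
    rcases le_or_gt (-1) (δ*t) with h | h
    · have h2 : -(1/2) ≤ psi (δ*t) := psi_ge _
      nlinarith
    · have h2 : psi (δ*t) = -(1/2) := by unfold psi; rw [if_pos h.le]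
      have h3 : 1 ≤ δ*(-t) := by nlinarith
      nlinarith

lemma per1 (δ q t : ℝ) (hδ0 : 0 < δ) (hδ1 : δ ≤ 1) (hq : 0 ≤ q) :
    (δ * psi' (δ*t) - δ^2 * psi' (-t)) * (-q - t) ≤ δ^2*q + (1+δ^2)/2 - δ^2*|t| := by
  have ha0 := psi'_nonneg (δ*t); have ha1 := psi'_le_one (δ*t)
  have hc0 := psi'_nonneg (-t); have hc1 := psi'_le_one (-t)
  set a := psi' (δ*t) with hadef
  set c := psi' (-t) with hcdef
  rcases le_or_gt 0 t with ht | ht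
  · have haa : a = 1 := psi'_eq_one _ (by positivity)
    have hkey : t * c ≤ 1/2 := by
      have := psi'_key (-t) (by linarith)
      rw [← hcdef] at this; linarith
    rw [abs_of_nonneg ht, haa]
    have p1 : 0 ≤ δ^2 * (q*(1-c)) := mul_nonneg (sq_nonneg δ) (mul_nonneg hq (by linarith))
    have p2 : δ^2 * (t*c) ≤ δ^2 * (1/2) := by nlinarith [sq_nonneg δ]
    have p3 : 0 ≤ δ*t*(1-δ) := by
      apply mul_nonneg (mul_nonneg hδ0.le ht); linarith
    have p4 : 0 ≤ δ*q := by positivity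
    nlinarith [p1, p2, p3, p4]
  · have hcc : c = 1 := psi'_eq_one _ (by linarith)
    have hkey : -(δ*t) * a ≤ 1/2 := psi'_key (δ*t) (by nlinarith)
    rw [abs_of_neg ht, hcc]
    have p1 : 0 ≤ δ*a*q := by positivity
    nlinarith [p1, hkey]

lemma coef_bound (δ a c r : ℝ) (hδ0 : 0 < δ) (hδ1 : δ ≤ 1) (ha0 : 0 ≤ a) (ha1 : a ≤ 1)
    (hc0 : 0 ≤ c) (hc1 : c ≤ 1) (hr : 0 ≤ r) (hrδ : (r-1)*δ ≤ 1) :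
    (δ*a - δ^2*c)*(1-r) ≤ δ := by
  rcases le_or_gt r 1 with h | h
  · nlinarith [mul_nonneg (mul_nonneg hδ0.le (show 0 ≤ 1-a by linarith)) (show 0 ≤ 1-r by linarith),
      mul_nonneg (mul_nonneg (mul_nonneg hδ0.le hδ0.le) hc0) (show 0 ≤ 1-r by linarith),
      mul_nonneg hδ0.le hr]
  · nlinarith [mul_nonneg (mul_nonneg hδ0.le ha0) (show 0 ≤ r-1 by linarith),
      mul_nonneg (mul_nonneg hδ0.le hc0) (show 0 ≤ 1-(r-1)*δ by linarith),
      mul_nonneg hδ0.le (show 0 ≤ 1-c by linarith)]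

lemma per2 (δ q t r s u : ℝ) (hδ0 : 0 < δ) (hδ1 : δ ≤ 1) (hq : 0 ≤ q) (hr : 0 ≤ r)
    (hrδ : (r-1)*δ ≤ 1) (hs : 0 < s) (hu : 0 ≤ u) :
    (δ * psi' (δ*t) - δ^2 * psi' (-t)) * (-q - t + s*(1-r)*u) ≤
      δ^2*q + δ^2/2 - δ^2 * max (-t) 0 - δ*(max t 0 - max (-t) 0) + δ*s*u := by
  have ha0 := psi'_nonneg (δ*t); have ha1 := psi'_le_one (δ*t)
  have hc0 := psi'_nonneg (-t); have hc1 := psi'_le_one (-t)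
  set a := psi' (δ*t) with hadef
  set c := psi' (-t) with hcdef
  have hcoef : (δ*a - δ^2*c)*(1-r) ≤ δ := coef_bound δ a c r hδ0 hδ1 ha0 ha1 hc0 hc1 hr hrδ
  have hpart2 : (δ*a - δ^2*c)*(s*(1-r)*u) ≤ δ*(s*u) := by
    have h1 : ((δ*a - δ^2*c)*(1-r))*(s*u) ≤ δ*(s*u) :=
      mul_le_mul_of_nonneg_right hcoef (by positivity)
    nlinarith [h1]
  have hpart1 : (δ*a - δ^2*c)*(-q - t) ≤
      δ^2*q + δ^2/2 - δ^2 * max (-t) 0 - δ*(max t 0 - max (-t) 0) := by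
    rcases le_or_gt 0 t with ht | ht
    · have haa : a = 1 := psi'_eq_one _ (by positivity)
      have hkey : t * c ≤ 1/2 := by
        have := psi'_key (-t) (by linarith)
        rw [← hcdef] at this; linarith
      rw [haa, max_eq_left ht, max_eq_right (by linarith : -t ≤ 0)]
      have p1 : 0 ≤ δ^2 * (q*(1-c)) := mul_nonneg (sq_nonneg δ) (mul_nonneg hq (by linarith))
      have p2 : δ^2 * (t*c) ≤ δ^2 * (1/2) := by nlinarith [sq_nonneg δ]
      have p4 : 0 ≤ δ*q := by positivity
      nlinarith [p1, p2, p4]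
    · have hcc : c = 1 := psi'_eq_one _ (by linarith)
      rw [hcc, max_eq_right ht.le, max_eq_left (by linarith : (0:ℝ) ≤ -t)]
      have p1 : 0 ≤ δ*a*q := by positivity
      have p2 : δ*(-t)*a ≤ δ*(-t) := by
        have := mul_le_of_le_one_right (by nlinarith : (0:ℝ) ≤ δ*(-t)) ha1
        linarith
      nlinarith [p1, p2, sq_nonneg δ]
  calc (δ*a - δ^2*c) * (-q - t + s*(1-r)*u)
      = (δ*a - δ^2*c)*(-q - t) + (δ*a - δ^2*c)*(s*(1-r)*u) := by ring
    _ ≤ _ := by linarith [hpart1, hpart2]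

lemma per2' (δ q t r s u : ℝ) (hδ0 : 0 < δ) (hδ1 : δ ≤ 1) (hq : 0 ≤ q) (hr : 0 ≤ r)
    (hrδ : (r-1)*δ ≤ 1) (hs : 0 < s) (hu : 0 ≤ u) (ht : 0 < t) :
    (δ * psi' (δ*t) - δ^2 * psi' (-t)) * (-q - t + s*(1-r)*u) ≤
      δ^2*q + δ^2/2 - δ^2 * max (-t) 0 - δ*(max t 0 - max (-t) 0) + δ*s*u - δ*q := by
  have ha0 := psi'_nonneg (δ*t); have ha1 := psi'_le_one (δ*t)
  have hc0 := psi'_nonneg (-t); have hc1 := psi'_le_one (-t)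
  set a := psi' (δ*t) with hadef
  set c := psi' (-t) with hcdef
  have hcoef : (δ*a - δ^2*c)*(1-r) ≤ δ := coef_bound δ a c r hδ0 hδ1 ha0 ha1 hc0 hc1 hr hrδ
  have hpart2 : (δ*a - δ^2*c)*(s*(1-r)*u) ≤ δ*(s*u) := by
    have h1 : ((δ*a - δ^2*c)*(1-r))*(s*u) ≤ δ*(s*u) :=
      mul_le_mul_of_nonneg_right hcoef (by positivity)
    nlinarith [h1]
  have haa : a = 1 := psi'_eq_one _ (by positivity)
  have hkey : t * c ≤ 1/2 := by
    have := psi'_key (-t) (by linarith)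
    rw [← hcdef] at this; linarith
  have hpart1 : (δ*a - δ^2*c)*(-q - t) ≤
      δ^2*q + δ^2/2 - δ^2 * max (-t) 0 - δ*(max t 0 - max (-t) 0) - δ*q := by
    rw [haa, max_eq_left ht.le, max_eq_right (by linarith : -t ≤ 0)]
    have p1 : 0 ≤ δ^2 * (q*(1-c)) := mul_nonneg (sq_nonneg δ) (mul_nonneg hq (by linarith))
    have p2 : δ^2 * (t*c) ≤ δ^2 * (1/2) := by nlinarith [sq_nonneg δ]
    have p3 : 0 ≤ δ*t*(1-δ) := by
      apply mul_nonneg (mul_nonneg hδ0.le ht.le); linarith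
    nlinarith [p1, p2, p3]
  calc (δ*a - δ^2*c) * (-q - t + s*(1-r)*u)
      = (δ*a - δ^2*c)*(-q - t) + (δ*a - δ^2*c)*(s*(1-r)*u) := by ring
    _ ≤ _ := by linarith [hpart1, hpart2]

lemma base_eq (m : ℕ) (μ : Fin m → ℝ) (hμ : ∀ i, μ i ≠ 0) (δ C : ℝ) (y : Fin m → ℝ) :
    δ^2 * Psi m μ (-y) + Psid m μ δ y + C
      = (∑ i, (μ i)⁻¹ * (δ^2 * psi (-(y i)) + psi (δ * y i))) + C := by
  unfold Psi Psid
  rw [Finset.mul_sum, ← Finset.sum_add_distrib]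
  congr 1
  refine Finset.sum_congr rfl fun i _ => ?_
  have h := hμ i
  simp only [Pi.neg_apply]
  field_simp

lemma hasFDerivAt_base (m : ℕ) (μ : Fin m → ℝ) (hμ : ∀ i, μ i ≠ 0) (δ C : ℝ)
    (x : Fin m → ℝ) :
    HasFDerivAt (fun y => δ^2 * Psi m μ (-y) + Psid m μ δ y + C)
      (∑ i, (μ i)⁻¹ • ((δ^2 * psi' (-(x i))) • -(ContinuousLinearMap.proj i :
          (Fin m → ℝ) →L[ℝ] ℝ) + psi' (δ * x i) • (δ • (ContinuousLinearMap.proj i :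
          (Fin m → ℝ) →L[ℝ] ℝ)))) x := by
  have hfun : (fun y : Fin m → ℝ => δ^2 * Psi m μ (-y) + Psid m μ δ y + C)
      = fun y => (∑ i, (μ i)⁻¹ * (δ^2 * psi (-(y i)) + psi (δ * y i))) + C := by
    funext y; exact base_eq m μ hμ δ C y
  rw [hfun]
  apply HasFDerivAt.add_const
  apply HasFDerivAt.fun_sum
  intro i _
  have e1 : HasFDerivAt (fun y : Fin m → ℝ => y i)
      (ContinuousLinearMap.proj i : (Fin m → ℝ) →L[ℝ] ℝ) x :=
    (ContinuousLinearMap.proj i : (Fin m → ℝ) →L[ℝ] ℝ).hasFDerivAt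
  have e3 : HasFDerivAt (fun y : Fin m → ℝ => psi (-(y i)))
      (psi' (-(x i)) • -(ContinuousLinearMap.proj i : (Fin m → ℝ) →L[ℝ] ℝ)) x := by
    have := (hasDerivAt_psi (-(x i))).comp_hasFDerivAt x e1.neg; exact this
  have e5 : HasFDerivAt (fun y : Fin m → ℝ => psi (δ * y i))
      (psi' (δ * x i) • (δ • (ContinuousLinearMap.proj i : (Fin m → ℝ) →L[ℝ] ℝ))) x := by
    have := (hasDerivAt_psi (δ * x i)).comp_hasFDerivAt x (e1.const_mul δ); exact this
  have e6 := ((e3.const_mul (δ^2)).fun_add e5).const_mul (μ i)⁻¹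
  refine e6.congr_fderiv ?_
  ext v
  simp [smul_smul]
lemma max_sub_max_neg (t : ℝ) : max t 0 - max (-t) 0 = t := by
  rcases le_total t 0 with h | h
  · rw [max_eq_right h, max_eq_left (by linarith)]; ring
  · rw [max_eq_left h, max_eq_right (by linarith)]; ring

lemma fderiv_Vpd_eval (m : ℕ) (μ : Fin m → ℝ) (hμne : ∀ i, μ i ≠ 0) (δ p : ℝ)
    (x b : Fin m → ℝ)
    (hFpos : 0 < δ^2 * Psi m μ (-x) + Psid m μ δ x + (m:ℝ)/⨅ i, μ i) :
    fderiv ℝ (Vpd m μ δ p) x b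
      = (p * (δ^2 * Psi m μ (-x) + Psid m μ δ x + (m:ℝ)/⨅ i, μ i) ^ (p-1))
        * ∑ i, (δ * psi' (δ * x i) - δ^2 * psi' (-(x i))) * (b i * (μ i)⁻¹) := by
  have hD := hasFDerivAt_base m μ hμne δ ((m:ℝ)/⨅ i, μ i) x
  have hV := hD.rpow_const (p := p) (Or.inl hFpos.ne')
  have hV' : HasFDerivAt (Vpd m μ δ p)
      ((p * (δ^2 * Psi m μ (-x) + Psid m μ δ x + (m:ℝ)/⨅ i, μ i) ^ (p-1)) •
        (∑ i, (μ i)⁻¹ • ((δ^2 * psi' (-(x i))) • -(ContinuousLinearMap.proj i :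
          (Fin m → ℝ) →L[ℝ] ℝ) + psi' (δ * x i) • (δ • (ContinuousLinearMap.proj i :
          (Fin m → ℝ) →L[ℝ] ℝ))))) x := hV
  have heval : (∑ i, (μ i)⁻¹ • ((δ^2 * psi' (-(x i))) • -(ContinuousLinearMap.proj i :
          (Fin m → ℝ) →L[ℝ] ℝ) + psi' (δ * x i) • (δ • (ContinuousLinearMap.proj i :
          (Fin m → ℝ) →L[ℝ] ℝ)))) b
      = ∑ i, (δ * psi' (δ * x i) - δ^2 * psi' (-(x i))) * (b i * (μ i)⁻¹) := by
    simp only [ContinuousLinearMap.sum_apply, ContinuousLinearMap.smul_apply,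
      ContinuousLinearMap.add_apply, ContinuousLinearMap.neg_apply,
      ContinuousLinearMap.proj_apply, smul_eq_mul]
    exact Finset.sum_congr rfl fun i _ => by ring
  rw [hV'.fderiv, ContinuousLinearMap.smul_apply, heval, smul_eq_mul]

/-- Drift inequalities for `𝒱_{p,δ}`: assume `β̃ > 0` and `δ ∈ (0,1]` with
`(max_i γ_i/μ_i - 1)⁺ δ ≤ 1`. Then for every `p > 1`:
(i) on `K₋`, `⟨b̃(x,u), ∇𝒱_{p,δ}(x)⟩ ≤ pδ(δβ̃ + (m/(2δ))(1+δ²) - δ‖x‖₁) 𝒱_{p-1,δ}(x)`;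
(ii) on `K₊`, `⟨b̃(x,u), ∇𝒱_{p,δ}(x)⟩ ≤ -pδ(β̃/m - δβ̃ - δm/2 + δ‖x⁻‖₁) 𝒱_{p-1,δ}(x)`. -/
theorem stmt_13 (m : ℕ) (hm : 1 ≤ m) (μ γ : Fin m → ℝ)
    (hμ : ∀ i, 0 < μ i) (hγ : ∀ i, 0 ≤ γ i)
    (βt : ℝ) (hβ : 0 < βt)
    (δ : ℝ) (hδ0 : 0 < δ) (hδ1 : δ ≤ 1)
    (hδγ : max ((⨆ i, γ i / μ i) - 1) 0 * δ ≤ 1)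
    (p : ℝ) (hp : 1 < p) :
    (∀ x u : Fin m → ℝ, ∑ i, x i ≤ 0 → (∀ i, 0 ≤ u i) → ∑ i, u i = 1 →
      fderiv ℝ (Vpd m μ δ p) x (drift m μ γ βt x u) ≤
        p * δ * (δ * βt + (m : ℝ) / (2 * δ) * (1 + δ ^ 2) - δ * ∑ i, |x i|)
          * Vpd m μ δ (p - 1) x) ∧
    (∀ x u : Fin m → ℝ, 0 < ∑ i, x i → (∀ i, 0 ≤ u i) → ∑ i, u i = 1 →
      fderiv ℝ (Vpd m μ δ p) x (drift m μ γ βt x u) ≤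
        -(p * δ * (βt / (m : ℝ) - δ * βt - δ * (m : ℝ) / 2 + δ * ∑ i, max (-(x i)) 0)
          * Vpd m μ δ (p - 1) x)) := by
  haveI : Nonempty (Fin m) := ⟨⟨0, hm⟩⟩
  have hμne : ∀ i, μ i ≠ 0 := fun i => (hμ i).ne'
  obtain ⟨i0, hi0⟩ := Finite.exists_min μ
  have hbdd : BddBelow (Set.range μ) := (Set.finite_range μ).bddBelow
  have hinf_eq : (⨅ i, μ i) = μ i0 := le_antisymm (ciInf_le hbdd i0) (le_ciInf hi0)
  have hinf_pos : 0 < ⨅ i, μ i := hinf_eq ▸ hμ i0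
  have hinf_le : ∀ i, (⨅ i, μ i) ≤ μ i := fun i => ciInf_le hbdd i
  have hm0 : (0:ℝ) < (m:ℝ) := by
    have : 0 < m := hm
    exact_mod_cast this
  have hq : 0 ≤ βt / (m:ℝ) := by positivity
  have hbase_pos : ∀ x : Fin m → ℝ,
      0 < δ^2 * Psi m μ (-x) + Psid m μ δ x + (m:ℝ)/⨅ i, μ i := by
    intro x
    rw [base_eq m μ hμne δ _ x]
    have hterm : ∀ i : Fin m, -((1/2) * (⨅ j, μ j)⁻¹)
        ≤ (μ i)⁻¹ * (δ^2 * psi (-(x i)) + psi (δ * x i)) := by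
      intro i
      have h1 : -(1/2) ≤ δ^2 * psi (-(x i)) + psi (δ * x i) := psi_combo δ (x i) hδ0 hδ1
      have h2 : (μ i)⁻¹ * (-(1/2)) ≤ (μ i)⁻¹ * (δ^2 * psi (-(x i)) + psi (δ * x i)) :=
        mul_le_mul_of_nonneg_left h1 (inv_nonneg.mpr (hμ i).le)
      have h3 : (μ i)⁻¹ ≤ (⨅ j, μ j)⁻¹ := inv_anti₀ hinf_pos (hinf_le i)
      linarith
    have hsum := Finset.sum_le_sum (fun i (_ : i ∈ Finset.univ) => hterm i)
    rw [Finset.sum_const, Finset.card_univ, Fintype.card_fin, nsmul_eq_mul] at hsum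
    have hip : 0 < (⨅ j, μ j)⁻¹ := inv_pos.mpr hinf_pos
    have hC : (m:ℝ)/(⨅ i, μ i) = (m:ℝ) * (⨅ i, μ i)⁻¹ := div_eq_mul_inv _ _
    rw [hC]
    nlinarith [hsum]
  have hrfact : ∀ i, (γ i / μ i - 1) * δ ≤ 1 := by
    intro i
    have h1 : γ i / μ i ≤ ⨆ j, γ j / μ j :=
      le_ciSup (Set.Finite.bddAbove (Set.finite_range fun j => γ j / μ j)) i
    have h2 : (γ i / μ i - 1) * δ ≤ max ((⨆ j, γ j / μ j) - 1) 0 * δ :=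
      mul_le_mul_of_nonneg_right (le_trans (by linarith) (le_max_left _ _)) hδ0.le
    linarith
  have hrpos : ∀ i, 0 ≤ γ i / μ i := fun i => div_nonneg (hγ i) (hμ i).le
  constructor
  · -- case (i) : K₋
    intro x u hx _hu _hu1
    have hFpos := hbase_pos x
    have hfde := fderiv_Vpd_eval m μ hμne δ p x (drift m μ γ βt x u) hFpos
    have hS : max (∑ j, x j) 0 = 0 := max_eq_right hx
    have hib : ∀ i, drift m μ γ βt x u i * (μ i)⁻¹ = -(βt/(m:ℝ)) - x i := by
      intro i
      unfold drift
      rw [hS]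
      have := hμne i
      field_simp
      ring
    have hterm : ∀ i : Fin m, (δ * psi' (δ * x i) - δ^2 * psi' (-(x i)))
        * (drift m μ γ βt x u i * (μ i)⁻¹)
        ≤ δ^2*(βt/(m:ℝ)) + (1+δ^2)/2 - δ^2*|x i| := by
      intro i
      rw [hib i]
      exact per1 δ (βt/(m:ℝ)) (x i) hδ0 hδ1 hq
    have hsum := Finset.sum_le_sum (fun i (_ : i ∈ Finset.univ) => hterm i)
    have hsumQ : ∑ i : Fin m, (δ^2*(βt/(m:ℝ)) + (1+δ^2)/2 - δ^2*|x i|)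
        = (m:ℝ)*(δ^2*(βt/(m:ℝ)) + (1+δ^2)/2) - δ^2*∑ i, |x i| := by
      rw [Finset.sum_sub_distrib, Finset.sum_const, Finset.card_univ, Fintype.card_fin,
        nsmul_eq_mul, ← Finset.mul_sum]
    have hkey : ∑ i, (δ * psi' (δ * x i) - δ^2 * psi' (-(x i)))
        * (drift m μ γ βt x u i * (μ i)⁻¹)
        ≤ δ * (δ * βt + (m:ℝ)/(2*δ) * (1 + δ^2) - δ * ∑ i, |x i|) := by
      rw [hsumQ] at hsum
      have heq : (m:ℝ)*(δ^2*(βt/(m:ℝ)) + (1+δ^2)/2) - δ^2*∑ i, |x i|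
          = δ * (δ * βt + (m:ℝ)/(2*δ) * (1 + δ^2) - δ * ∑ i, |x i|) := by
        field_simp
      linarith
    have hnn : 0 ≤ p * (δ^2 * Psi m μ (-x) + Psid m μ δ x + (m:ℝ)/⨅ i, μ i) ^ (p-1) :=
      mul_nonneg (by linarith) (Real.rpow_nonneg hFpos.le _)
    have hVp1 : Vpd m μ δ (p-1) x
        = (δ^2 * Psi m μ (-x) + Psid m μ δ x + (m:ℝ)/⨅ i, μ i) ^ (p-1) := rfl
    rw [hfde, hVp1]
    exact le_trans (mul_le_mul_of_nonneg_left hkey hnn) (le_of_eq (by ring))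
  · -- case (ii) : K₊
    intro x u hx hu hu1
    have hFpos := hbase_pos x
    have hfde := fderiv_Vpd_eval m μ hμne δ p x (drift m μ γ βt x u) hFpos
    have hS : max (∑ j, x j) 0 = ∑ j, x j := max_eq_left hx.le
    obtain ⟨i₀, hi₀⟩ : ∃ i, 0 < x i := by
      by_contra hcon
      push_neg at hcon
      exact absurd (Finset.sum_nonpos fun i _ => hcon i) (not_le.mpr hx)
    have hib : ∀ i, drift m μ γ βt x u i * (μ i)⁻¹
        = -(βt/(m:ℝ)) - x i + (∑ j, x j)*(1 - γ i/μ i)*u i := by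
      intro i
      unfold drift
      rw [hS]
      have := hμne i
      field_simp
      ring
    have hterm : ∀ i : Fin m, (δ * psi' (δ * x i) - δ^2 * psi' (-(x i)))
        * (drift m μ γ βt x u i * (μ i)⁻¹)
        ≤ δ^2*(βt/(m:ℝ)) + δ^2/2 - δ^2 * max (-(x i)) 0
          - δ*(max (x i) 0 - max (-(x i)) 0) + δ*(∑ j, x j)*u i := by
      intro i
      rw [hib i]
      exact per2 δ (βt/(m:ℝ)) (x i) (γ i/μ i) (∑ j, x j) (u i) hδ0 hδ1 hq (hrpos i)
        (hrfact i) hx (hu i)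
    have hterm0 : (δ * psi' (δ * x i₀) - δ^2 * psi' (-(x i₀)))
        * (drift m μ γ βt x u i₀ * (μ i₀)⁻¹)
        ≤ δ^2*(βt/(m:ℝ)) + δ^2/2 - δ^2 * max (-(x i₀)) 0
          - δ*(max (x i₀) 0 - max (-(x i₀)) 0) + δ*(∑ j, x j)*u i₀ - δ*(βt/(m:ℝ)) := by
      rw [hib i₀]
      exact per2' δ (βt/(m:ℝ)) (x i₀) (γ i₀/μ i₀) (∑ j, x j) (u i₀) hδ0 hδ1 hq (hrpos i₀)
        (hrfact i₀) hx (hu i₀) hi₀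
    have hsum : ∑ i, (δ * psi' (δ * x i) - δ^2 * psi' (-(x i)))
        * (drift m μ γ βt x u i * (μ i)⁻¹)
        ≤ (∑ i, (δ^2*(βt/(m:ℝ)) + δ^2/2 - δ^2 * max (-(x i)) 0
          - δ*(max (x i) 0 - max (-(x i)) 0) + δ*(∑ j, x j)*u i)) - δ*(βt/(m:ℝ)) := by
      classical
      rw [← Finset.add_sum_erase Finset.univ
          (fun i => (δ * psi' (δ * x i) - δ^2 * psi' (-(x i)))
            * (drift m μ γ βt x u i * (μ i)⁻¹)) (Finset.mem_univ i₀),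
        ← Finset.add_sum_erase Finset.univ
          (fun i => δ^2*(βt/(m:ℝ)) + δ^2/2 - δ^2 * max (-(x i)) 0
            - δ*(max (x i) 0 - max (-(x i)) 0) + δ*(∑ j, x j)*u i) (Finset.mem_univ i₀)]
      have h1 := Finset.sum_le_sum
        (fun i (_ : i ∈ Finset.univ.erase i₀) => hterm i)
      linarith
    have e1 : ∑ i, (max (x i) 0 - max (-(x i)) 0) = ∑ j, x j :=
      Finset.sum_congr rfl fun i _ => max_sub_max_neg (x i)
    have hsumQ : ∑ i : Fin m, (δ^2*(βt/(m:ℝ)) + δ^2/2 - δ^2 * max (-(x i)) 0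
          - δ*(max (x i) 0 - max (-(x i)) 0) + δ*(∑ j, x j)*u i)
        = (m:ℝ)*(δ^2*(βt/(m:ℝ)) + δ^2/2) - δ^2*∑ i, max (-(x i)) 0
          - δ*(∑ j, x j) + δ*(∑ j, x j)*1 := by
      have e1' : (∑ i, max (x i) 0) - ∑ i, max (-(x i)) 0 = ∑ j, x j := by
        rw [← Finset.sum_sub_distrib]; exact e1
      simp only [Finset.sum_add_distrib, Finset.sum_sub_distrib, Finset.sum_const,
        Finset.card_univ, Fintype.card_fin, nsmul_eq_mul, ← Finset.mul_sum]
      rw [e1', hu1, mul_one]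
      ring
    have hkey : ∑ i, (δ * psi' (δ * x i) - δ^2 * psi' (-(x i)))
        * (drift m μ γ βt x u i * (μ i)⁻¹)
        ≤ -(δ * (βt/(m:ℝ) - δ*βt - δ*(m:ℝ)/2 + δ*∑ i, max (-(x i)) 0)) := by
      rw [hsumQ] at hsum
      have heq : (m:ℝ)*(δ^2*(βt/(m:ℝ)) + δ^2/2) - δ^2*∑ i, max (-(x i)) 0
          - δ*(∑ j, x j) + δ*(∑ j, x j)*1 - δ*(βt/(m:ℝ))
          = -(δ * (βt/(m:ℝ) - δ*βt - δ*(m:ℝ)/2 + δ*∑ i, max (-(x i)) 0)) := by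
        field_simp
        ring
      linarith
    have hnn : 0 ≤ p * (δ^2 * Psi m μ (-x) + Psid m μ δ x + (m:ℝ)/⨅ i, μ i) ^ (p-1) :=
      mul_nonneg (by linarith) (Real.rpow_nonneg hFpos.le _)
    have hVp1 : Vpd m μ δ (p-1) x
        = (δ^2 * Psi m μ (-x) + Psid m μ δ x + (m:ℝ)/⨅ i, μ i) ^ (p-1) := rfl
    rw [hfde, hVp1]
    exact le_trans (mul_le_mul_of_nonneg_left hkey hnn) (le_of_eq (by ring))
end
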